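/- Let d ≥ 2, let z ∈ ℝ^d, let R ≥ √d, and let Σ = {x ∈ ℝ^d : ‖x − z‖ = R}. Then for every pole p of Σ (i.e., every point of the form p = z + R·e_i or p = z − R·e_i with e_i a standard basis vector), there exists a point a ∈ ℤ^d with ‖a − z‖ ≤ R, with ‖a − p‖ ≤ √(2√d·R), and whose Euclidean distance to Σ (i.e., inf{‖a − s‖ : s ∈ Σ}) is at most 2√d·(2√d/R)^{1 − 1/2^{d−1}}. -/

import Mathlib

open Set Metric MeasureTheory

noncomputable section

/-- The integer lattice `ℤ^d` as a subset of `ℝ^d`. -/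
def intLattice (d : ℕ) : Set (EuclideanSpace ℝ (Fin d)) :=
  {x | ∀ i, ∃ n : ℤ, x i = (n : ℝ)}

/-- The canonical embedding of integer vectors into `ℝ^d`. -/
def toEuc (d : ℕ) (a : Fin d → ℤ) : EuclideanSpace ℝ (Fin d) :=
  WithLp.toLp 2 (fun i => (a i : ℝ))

/-- The `k`-th Brillouin zone of `a` in `A`: points `x` such that at most `k-1` points of
`A \ {a}` are strictly closer to `x` than `a`, and at least `k-1` points of `A \ {a}` are
at distance at most `dist x a` from `x`. -/
def brillouinZone (d k : ℕ) (A : Set (EuclideanSpace ℝ (Fin d)))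
    (a : EuclideanSpace ℝ (Fin d)) : Set (EuclideanSpace ℝ (Fin d)) :=
  {x | {p | p ∈ A \ {a} ∧ dist x p < dist x a}.encard ≤ ((k - 1 : ℕ) : ℕ∞) ∧
       ((k - 1 : ℕ) : ℕ∞) ≤ {p | p ∈ A \ {a} ∧ dist x p ≤ dist x a}.encard}

/-- The set of points with exactly `k-1` points of `A \ {a}` strictly closer than `a` and
no point of `A \ {a}` at exactly distance `dist x a`; its connected components are the
chambers of the `k`-th Brillouin zone. -/
def chamberRegion (d k : ℕ) (A : Set (EuclideanSpace ℝ (Fin d)))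
    (a : EuclideanSpace ℝ (Fin d)) : Set (EuclideanSpace ℝ (Fin d)) :=
  {x | {p | p ∈ A \ {a} ∧ dist x p < dist x a}.encard = ((k - 1 : ℕ) : ℕ∞) ∧
       ∀ p ∈ A \ {a}, dist x p ≠ dist x a}

/-- The chambers of the `k`-th Brillouin zone of `a` in `A`. -/
def chambers (d k : ℕ) (A : Set (EuclideanSpace ℝ (Fin d)))
    (a : EuclideanSpace ℝ (Fin d)) : Set (Set (EuclideanSpace ℝ (Fin d))) :=
  {C | ∃ x ∈ chamberRegion d k A a, C = connectedComponentIn (chamberRegion d k A a) x}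

/-- `ν_d`, the volume of the unit ball in `ℝ^d`. -/
def unitBallVol (d : ℕ) : ℝ := Real.pi ^ ((d : ℝ) / 2) / Real.Gamma ((d : ℝ) / 2 + 1)

namespace NIP
noncomputable def f (x : ℝ) : ℝ := 2 * Real.sqrt (x + 1/4) + 1
lemma f_def (x : ℝ) : f x = 2 * Real.sqrt (x + 1/4) + 1 := rfl
lemma f_mono : Monotone f := fun x y h => by
  have := Real.sqrt_le_sqrt (show x + 1/4 ≤ y + 1/4 by linarith)
  unfold f; linarith
lemma f_nonneg (x : ℝ) : 0 ≤ f x := by unfold f; positivity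
lemma f_iter_one_nonneg (m : ℕ) : 0 ≤ f^[m] 1 := by
  induction m with
  | zero => norm_num
  | succ m ih => rw [Function.iterate_succ_apply']; exact f_nonneg _

lemma f_one_le : f 1 ≤ 13/4 := by
  unfold f
  have : Real.sqrt (1 + 1/4) ≤ 9/8 := by
    rw [show (1:ℝ)+1/4 = 5/4 by norm_num,
      show (9/8:ℝ) = Real.sqrt ((9/8)^2) from (Real.sqrt_sq (by norm_num)).symm]
    exact Real.sqrt_le_sqrt (by norm_num)
  linarith

lemma f_iter_one_le (m : ℕ) : f^[m] 1 ≤ 6 := by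
  induction m with
  | zero => norm_num
  | succ m ih =>
    rw [Function.iterate_succ_apply']
    have h1 : f (f^[m] 1) ≤ f 6 := f_mono ih
    have h2 : f 6 = 6 := by
      unfold f
      rw [show (6:ℝ)+1/4 = (5/2)^2 by norm_num, Real.sqrt_sq (by norm_num)]
      norm_num
    linarith

lemma f_iter_le (m : ℕ) (B : ℝ) (hB : 1 ≤ B) :
    f^[m] B ≤ f^[m] 1 * B ^ ((1/2 : ℝ)^m) := by
  induction m with
  | zero => simpa using hB
  | succ m ih =>
    have hB0 : (0:ℝ) ≤ B := by linarith
    set u : ℝ := (1/2:ℝ)^m with hudef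
    have hu0 : (0:ℝ) ≤ u := by positivity
    have hBu : (1:ℝ) ≤ B ^ u := Real.one_le_rpow hB hu0
    have hK : (0:ℝ) ≤ f^[m] 1 := f_iter_one_nonneg m
    rw [Function.iterate_succ_apply', Function.iterate_succ_apply']
    have h1 : f (f^[m] B) ≤ f (f^[m] 1 * B ^ u) := f_mono ih
    have h2 : f (f^[m] 1 * B ^ u) ≤ f (f^[m] 1) * B ^ ((1/2:ℝ)^(m+1)) := by
      have e1 : B ^ ((1/2:ℝ)^(m+1)) = Real.sqrt (B ^ u) := by
        rw [Real.sqrt_eq_rpow, pow_succ, Real.rpow_mul hB0]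
      rw [e1, f_def, f_def]
      set K : ℝ := f^[m] 1
      set X : ℝ := B ^ u
      have hs1 : Real.sqrt (K * X + 1/4) ≤ Real.sqrt (K + 1/4) * Real.sqrt X := by
        rw [← Real.sqrt_mul (by linarith : (0:ℝ) ≤ K + 1/4)]
        apply Real.sqrt_le_sqrt
        nlinarith
      have hsX : (1:ℝ) ≤ Real.sqrt X := by
        rw [show (1:ℝ) = Real.sqrt 1 by simp]; exact Real.sqrt_le_sqrt hBu
      have hs0 : 0 ≤ Real.sqrt (K + 1/4) := Real.sqrt_nonneg _
      nlinarith
    linarith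
lemma core {d : ℕ} (ε : Fin d → ℝ) (hε0 : ∀ k, 0 ≤ ε k) (hεh : ∀ k, ε k ≤ 1/2) :
    ∀ (s : Finset (Fin d)) (D : ℝ), 0 ≤ D →
      ∃ r : Fin d → ℝ, (∀ k, ∃ t : ℕ, r k = ε k + t) ∧
        0 ≤ D - ∑ k ∈ s, (r k ^ 2 - ε k ^ 2) ∧
        D - ∑ k ∈ s, (r k ^ 2 - ε k ^ 2) ≤ f^[s.card] D := by
  intro s
  induction s using Finset.induction_on with
  | empty =>
    intro D hD
    exact ⟨ε, fun k => ⟨0, by simp⟩, by simpa, by simpa⟩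
  | @insert k s hk ih =>
    intro D hD
    set q : ℝ := Real.sqrt (D + ε k ^ 2) with hq
    have hq0 : 0 ≤ q := Real.sqrt_nonneg _
    have hq2 : q ^ 2 = D + ε k ^ 2 := Real.sq_sqrt (by positivity)
    have hεq : ε k ≤ q := by
      nlinarith [hε0 k, hq0, hq2]
    set t : ℕ := ⌊q - ε k⌋₊ with ht
    set w : ℝ := ε k + t with hw
    have hw0 : 0 ≤ w := by rw [hw]; exact add_nonneg (hε0 k) (Nat.cast_nonneg t)
    have hwq : w ≤ q := by
      have := Nat.floor_le (sub_nonneg.mpr hεq)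
      rw [hw]; linarith
    have hqw1 : q < w + 1 := by
      have := Nat.lt_floor_add_one (q - ε k)
      rw [hw]; push_cast; linarith
    have hw2 : w ^ 2 ≤ D + ε k ^ 2 := by
      calc w ^ 2 ≤ q ^ 2 := by nlinarith
      _ = _ := hq2
    set D₁ : ℝ := D - (w ^ 2 - ε k ^ 2) with hD₁
    have hD₁0 : 0 ≤ D₁ := by rw [hD₁]; linarith
    have hD₁f : D₁ ≤ f D := by
      have h1 : D + ε k ^ 2 < (w + 1) ^ 2 := by nlinarith
      have h2 : D₁ < 2 * w + 1 := by rw [hD₁]; nlinarith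
      have h3 : q ≤ Real.sqrt (D + 1/4) := by
        apply Real.sqrt_le_sqrt
        have := hεh k; have := hε0 k; nlinarith
      rw [f_def]; nlinarith
    obtain ⟨r, hr1, hr3, hr4⟩ := ih D₁ hD₁0
    refine ⟨Function.update r k w, ?_, ?_, ?_⟩
    · intro j
      rcases eq_or_ne j k with rfl | hjk
      · exact ⟨t, by simp [hw]⟩
      · rw [Function.update_of_ne hjk]; exact hr1 j
    · rw [Finset.sum_insert hk]
      have hsum : ∑ x ∈ s, (Function.update r k w x ^ 2 - ε x ^ 2)
          = ∑ x ∈ s, (r x ^ 2 - ε x ^ 2) := by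
        apply Finset.sum_congr rfl
        intro x hx
        rw [Function.update_of_ne (by rintro rfl; exact hk hx)]
      rw [hsum, Function.update_self]
      rw [hD₁] at hr3; linarith
    · rw [Finset.sum_insert hk]
      have hsum : ∑ x ∈ s, (Function.update r k w x ^ 2 - ε x ^ 2)
          = ∑ x ∈ s, (r x ^ 2 - ε x ^ 2) := by
        apply Finset.sum_congr rfl
        intro x hx
        rw [Function.update_of_ne (by rintro rfl; exact hk hx)]
      rw [hsum, Function.update_self, Finset.card_insert_of_notMem hk,
        Function.iterate_succ_apply]
      calc D - (w ^ 2 - ε k ^ 2 + ∑ x ∈ s, (r x ^ 2 - ε x ^ 2))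
          = D₁ - ∑ x ∈ s, (r x ^ 2 - ε x ^ 2) := by rw [hD₁]; ring
        _ ≤ f^[s.card] D₁ := hr4
        _ ≤ f^[s.card] (f D) := f_mono.iterate s.card hD₁f
end NIP

namespace NIP
lemma aux_sq_quarter {x : ℝ} (h0 : 0 ≤ x) (h : x ≤ 1/2) : x^2 ≤ 1/4 := by nlinarith
lemma aux_sq_diff {e r : ℝ} (h0 : 0 ≤ e) (h : e ≤ r) : 0 ≤ r^2 - e^2 := by nlinarith
lemma aux_u43 {u : ℝ} (h0 : 0 ≤ u) (h : 2 ≤ u^2) : 4/3 ≤ u := by nlinarith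
lemma aux_sq_le {u R D : ℝ} (hu2 : u^2 = D) (hRu : u ≤ R) (h0 : 0 ≤ u) : D ≤ R^2 := by
  nlinarith
lemma aux_one_le {c : ℝ} (h0 : 0 ≤ c) (h : 1 ≤ c^2) : 1 ≤ c := by nlinarith
lemma aux_le_of_sq {c R : ℝ} (h0 : 0 ≤ c) (hR : 0 < R) (h : c^2 ≤ R^2) : c ≤ R := by
  nlinarith
lemma aux_D1R {c v D₀ R : ℝ} (hc2 : c^2 = D₀) (hcR : c ≤ R) (hc1 : 1 ≤ c)
    (hv1 : c - 1 < v) (hv2 : v ≤ c) : D₀ - v^2 ≤ 2*R - 1 := by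
  nlinarith [pow_le_pow_left₀ (show (0:ℝ) ≤ c - 1 by linarith) (le_of_lt hv1) 2]
lemma aux_RW0 {W R : ℝ} (h : W ≤ 2*R - 1) : 0 ≤ R^2 - W := by nlinarith [sq_nonneg (R-1)]
lemma aux_RW1 {W R : ℝ} (h : W ≤ 2*R - 1) : (R-1)^2 ≤ R^2 - W := by nlinarith
lemma aux_pole {R u c v E S D₁ dd : ℝ} (h1 : S ≤ D₁) (e : D₁ = R^2 - E - v^2)
    (hc2 : c^2 = R^2 - E) (hcR : c ≤ R) (hc0 : 0 ≤ c) (hv1 : c - 1 < v)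
    (hEd : E ≤ dd/4) (hu2 : u^2 = dd) (hRu : u ≤ R) (hu43 : 4/3 ≤ u) (hR0 : 0 < R) :
    (R - v)^2 + (S + E) ≤ 2*u*R := by
  have s1 : (R-v)^2 + (S + E) ≤ 2*R*(R - v) := by nlinarith
  have h2 : R * (R - c) ≤ E := by nlinarith [mul_nonneg (sub_nonneg.mpr hcR) hc0]
  have s2 : 2*R*(R - v) ≤ 2*E + 2*R := by
    nlinarith [mul_le_mul_of_nonneg_left (show R - v ≤ R - c + 1 by linarith)
      (show (0:ℝ) ≤ 2*R by linarith)]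
  have s3 : 2*E + 2*R ≤ 2*u*R := by
    nlinarith [mul_le_mul_of_nonneg_right hRu (show (0:ℝ) ≤ u - 1 by linarith)]
  linarith
lemma aux_RT {T R W : ℝ} (hT2 : T^2 = R^2 - W) (hTR : T ≤ R) (hT0 : 0 ≤ T) :
    (R - T)*R ≤ W := by nlinarith
lemma aux_4u {u dd : ℝ} (hu2 : u^2 = dd) (h3 : 3 ≤ dd) (hu0 : 0 ≤ u)
    (hu43 : 4/3 ≤ u) : 4*u ≤ u^4 := by nlinarith
lemma aux_6u {u dd : ℝ} (hu2 : u^2 = dd) (h3 : 3 ≤ dd) (hu0 : 0 ≤ u) : 6*u ≤ 4*u^2 := by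
  nlinarith
lemma aux_mulfin {K A B C R M : ℝ} (hk : K*(A*C) ≤ M) (hB : 0 ≤ B) (hR : 0 ≤ R) :
    K * (A*B) * (R*C) ≤ M*(B*R) := by
  nlinarith [mul_le_mul_of_nonneg_right hk (mul_nonneg hB hR)]
end NIP
open NIP

set_option maxHeartbeats 1600000 in
/-- For every sphere of radius `R ≥ √d` in `ℝ^d` and every one of its poles,
there is an integer point at distance at most `R` from the center, at most `√(2√d·R)` from
the pole, and at most `2√d·(2√d/R)^{1 - 1/2^{d-1}}` from the sphere. -/
theorem nearby_integer_points (d : ℕ) (hd : 2 ≤ d) (z : EuclideanSpace ℝ (Fin d)) (R : ℝ)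
    (hR : Real.sqrt d ≤ R) (i : Fin d) (s : ℝ) (hs : s = 1 ∨ s = -1) :
    ∃ a ∈ intLattice d, ‖a - z‖ ≤ R ∧
      ‖a - (z + (s * R) • EuclideanSpace.single i (1 : ℝ))‖
        ≤ Real.sqrt (2 * Real.sqrt d * R) ∧
      Metric.infDist a (Metric.sphere z R)
        ≤ 2 * Real.sqrt d * (2 * Real.sqrt d / R) ^ ((1 : ℝ) - 1 / 2 ^ (d - 1)) := by
  have hd2 : (2:ℝ) ≤ (d:ℝ) := by exact_mod_cast hd
  obtain ⟨u, hu⟩ : ∃ u : ℝ, u = Real.sqrt d := ⟨_, rfl⟩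
  rw [← hu] at hR
  have hu0 : 0 ≤ u := by rw [hu]; exact Real.sqrt_nonneg _
  have hu2 : u ^ 2 = (d:ℝ) := by rw [hu]; exact Real.sq_sqrt (by positivity)
  have hu43 : (4/3:ℝ) ≤ u := aux_u43 hu0 (by rw [hu2]; exact hd2)
  have hRu : u ≤ R := hR
  have hR1 : (4/3:ℝ) ≤ R := le_trans hu43 hRu
  have hR0 : (0:ℝ) < R := by linarith
  have hs2 : s ^ 2 = 1 := by rcases hs with h | h <;> rw [h] <;> norm_num
  -- epsilons
  obtain ⟨ε, hε⟩ : ∃ ε : Fin d → ℝ, ε = fun k => |(round (z k) : ℝ) - z k| := ⟨_, rfl⟩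
  have hε0 : ∀ k, 0 ≤ ε k := fun k => by rw [hε]; exact abs_nonneg _
  have hεh : ∀ k, ε k ≤ 1/2 := fun k => by rw [hε]; simp only; rw [abs_sub_comm]; exact abs_sub_round (z k)
  obtain ⟨E, hE⟩ : ∃ E : ℝ, E = ∑ k ∈ Finset.univ.erase i, ε k ^ 2 := ⟨_, rfl⟩
  have hE0 : 0 ≤ E := by rw [hE]; exact Finset.sum_nonneg fun k _ => sq_nonneg _
  have hEd : E ≤ (d:ℝ)/4 := by
    calc E ≤ ∑ k ∈ Finset.univ.erase i, (1/4:ℝ) := by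
          rw [hE]
          apply Finset.sum_le_sum
          intro k _
          exact aux_sq_quarter (hε0 k) (hεh k)
      _ = ((Finset.univ.erase i).card : ℝ) * (1/4) := by rw [Finset.sum_const, nsmul_eq_mul]
      _ ≤ (d:ℝ) * (1/4) := by
          have : (Finset.univ.erase i).card ≤ d := by
            calc (Finset.univ.erase i).card ≤ (Finset.univ : Finset (Fin d)).card :=
                  Finset.card_le_card (Finset.erase_subset _ _)
              _ = d := by simp
          have : ((Finset.univ.erase i).card : ℝ) ≤ (d:ℝ) := by exact_mod_cast this
          linarith
      _ = (d:ℝ)/4 := by ring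
  have hRd : (d:ℝ) ≤ R^2 := aux_sq_le hu2 hRu hu0
  obtain ⟨D₀, hD₀⟩ : ∃ D₀ : ℝ, D₀ = R^2 - E := ⟨_, rfl⟩
  have hD₀1 : (1:ℝ) ≤ D₀ := by rw [hD₀]; linarith
  have hD₀0 : (0:ℝ) ≤ D₀ := by linarith
  obtain ⟨c, hc⟩ : ∃ c : ℝ, c = Real.sqrt D₀ := ⟨_, rfl⟩
  have hc2 : c ^ 2 = D₀ := by rw [hc]; exact Real.sq_sqrt hD₀0
  have hc0 : 0 ≤ c := by rw [hc]; exact Real.sqrt_nonneg _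
  have hc1 : (1:ℝ) ≤ c := aux_one_le hc0 (by rw [hc2]; exact hD₀1)
  have hcR : c ≤ R := aux_le_of_sq hc0 hR0 (by rw [hc2, hD₀]; linarith)
  -- the pole coordinate
  obtain ⟨m, v, hv1, hv2, hm⟩ : ∃ (m : ℤ) (v : ℝ), c - 1 < v ∧ v ≤ c ∧ (m:ℝ) = z i + s * v := by
    rcases hs with h | h
    · exact ⟨⌊z i + c⌋, (⌊z i + c⌋ : ℝ) - z i,
        by linarith [Int.sub_one_lt_floor (z i + c)],
        by linarith [Int.floor_le (z i + c)], by rw [h]; ring⟩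
    · exact ⟨⌈z i - c⌉, z i - (⌈z i - c⌉ : ℝ),
        by linarith [Int.ceil_lt_add_one (z i - c)],
        by linarith [Int.le_ceil (z i - c)], by rw [h]; ring⟩
  have hv0 : 0 ≤ v := by linarith
  obtain ⟨D₁, hD₁⟩ : ∃ D₁ : ℝ, D₁ = D₀ - v ^ 2 := ⟨_, rfl⟩
  have hv2c : v ^ 2 ≤ c ^ 2 := pow_le_pow_left₀ hv0 hv2 2
  have hD₁0 : 0 ≤ D₁ := by rw [hD₁]; linarith [hc2]
  have hD₁R : D₁ ≤ 2*R - 1 := by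
    rw [hD₁]; exact aux_D1R hc2 hcR hc1 hv1 hv2
  -- apply the recursion
  obtain ⟨r, hr1, hr3, hr4⟩ := core ε hε0 hεh (Finset.univ.erase i) D₁ hD₁0
  have hcard : (Finset.univ.erase i).card = d - 1 := by
    rw [Finset.card_erase_of_mem (Finset.mem_univ i)]; simp
  obtain ⟨S, hS⟩ : ∃ S : ℝ, S = ∑ k ∈ Finset.univ.erase i, (r k ^ 2 - ε k ^ 2) := ⟨_, rfl⟩
  obtain ⟨W, hW⟩ : ∃ W : ℝ, W = D₁ - S := ⟨_, rfl⟩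
  have hW0 : 0 ≤ W := by rw [hW, hS]; exact hr3
  have hWf : W ≤ f^[d-1] D₁ := by rw [hW, hS]; rw [hcard] at hr4; exact hr4
  have hrge : ∀ k, ε k ≤ r k := by
    intro k; obtain ⟨t, ht⟩ := hr1 k
    rw [ht]; linarith [Nat.cast_nonneg (α := ℝ) t]
  have hr0 : ∀ k, 0 ≤ r k := fun k => le_trans (hε0 k) (hrge k)
  have hS0 : 0 ≤ S := by rw [hS]; exact Finset.sum_nonneg fun k _ => aux_sq_diff (hε0 k) (hrge k)
  have hWD₁ : W ≤ D₁ := by rw [hW]; linarith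
  -- the integer point
  obtain ⟨a, ha⟩ : ∃ a : EuclideanSpace ℝ (Fin d), a = WithLp.toLp 2 (fun k =>
      if k = i then (m : ℝ) else
        (if z k ≤ (round (z k) : ℝ) then z k + r k else z k - r k)) := ⟨_, rfl⟩
  have hak : ∀ k, k ≠ i → (a k - z k)^2 = r k ^ 2 := by
    intro k hki
    simp only [ha, PiLp.toLp_apply, if_neg hki]
    split_ifs <;> ring
  have hai : a i - z i = s * v := by simp only [ha, PiLp.toLp_apply, if_pos rfl, if_true]; rw [hm]; ring
  -- shared norm computations
  have hWR : W ≤ 2*R - 1 := le_trans hWD₁ hD₁R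
  have hRW0 : 0 ≤ R^2 - W := aux_RW0 hWR
  have hsum_az : ∑ k, (a k - z k)^2 = R^2 - W := by
    rw [← Finset.add_sum_erase Finset.univ (fun k => (a k - z k)^2) (Finset.mem_univ i)]
    have h1 : (a i - z i)^2 = v^2 := by rw [hai, mul_pow, hs2, one_mul]
    have h2 : ∑ k ∈ Finset.univ.erase i, (a k - z k)^2 = S + E := by
      rw [hS, hE, ← Finset.sum_add_distrib]
      apply Finset.sum_congr rfl
      intro k hk
      rw [hak k (Finset.ne_of_mem_erase hk)]; ring
    rw [h1, h2, hW, hD₁, hD₀]; ring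
  have hnaz : ‖a - z‖ = Real.sqrt (R^2 - W) := by
    rw [EuclideanSpace.norm_eq, ← hsum_az]
    congr 1
    apply Finset.sum_congr rfl
    intro k _
    simp only [PiLp.sub_apply, Real.norm_eq_abs, sq_abs]
  have hazR : ‖a - z‖ ≤ R := by
    rw [hnaz]
    calc Real.sqrt (R^2 - W) ≤ Real.sqrt (R^2) := Real.sqrt_le_sqrt (by linarith)
      _ = R := Real.sqrt_sq hR0.le
  refine ⟨a, ?_, hazR, ?_, ?_⟩

  · -- lattice membership
    intro k
    rcases eq_or_ne k i with rfl | hki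
    · exact ⟨m, by simp [ha, PiLp.toLp_apply]⟩
    · obtain ⟨t, ht⟩ := hr1 k
      by_cases hc' : z k ≤ (round (z k) : ℝ)
      · refine ⟨round (z k) + t, ?_⟩
        have : ε k = (round (z k) : ℝ) - z k := by
          simp only [hε]; exact abs_of_nonneg (by linarith)
        simp only [ha, PiLp.toLp_apply, if_neg hki, if_pos hc']
        rw [ht, this]; push_cast; ring
      · refine ⟨round (z k) - t, ?_⟩
        push_neg at hc'
        have : ε k = z k - (round (z k) : ℝ) := by
          simp only [hε]; rw [abs_of_neg (by linarith)]; ring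
        simp only [ha, PiLp.toLp_apply, if_neg hki, if_neg (not_le.mpr hc')]
        rw [ht, this]; push_cast; ring
  · -- distance to the pole
    have hsum_ap : ∑ k, ‖(a - (z + (s*R) • EuclideanSpace.single i (1:ℝ))) k‖^2
        = (R - v)^2 + (S + E) := by
      rw [← Finset.add_sum_erase Finset.univ _ (Finset.mem_univ i)]
      have hi : ‖(a - (z + (s*R) • EuclideanSpace.single i (1:ℝ))) i‖^2 = (R - v)^2 := by
        simp only [PiLp.sub_apply, PiLp.add_apply, PiLp.smul_apply,
          EuclideanSpace.single_apply, eq_self_iff_true, if_true, smul_eq_mul, mul_one,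
          Real.norm_eq_abs, sq_abs]
        have e : a i - (z i + s * R) = s * (v - R) := by linear_combination hai
        rw [e, mul_pow, hs2, one_mul]; ring
      have hrest : ∑ k ∈ Finset.univ.erase i,
          ‖(a - (z + (s*R) • EuclideanSpace.single i (1:ℝ))) k‖^2 = S + E := by
        rw [hS, hE, ← Finset.sum_add_distrib]
        apply Finset.sum_congr rfl
        intro k hk
        have hki : k ≠ i := Finset.ne_of_mem_erase hk
        simp only [PiLp.sub_apply, PiLp.add_apply, PiLp.smul_apply,
          EuclideanSpace.single_apply, if_neg hki, smul_eq_mul, mul_zero, add_zero,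
          Real.norm_eq_abs, sq_abs]
        rw [hak k hki]; ring
      rw [hi, hrest]
    have hbound : (R - v)^2 + (S + E) ≤ 2*u*R := by
      have h1 : S ≤ D₁ := by rw [hW] at hW0; linarith
      have e : D₁ = R^2 - E - v^2 := by rw [hD₁, hD₀]
      exact aux_pole h1 e (by rw [hc2, hD₀]) hcR hc0 hv1 hEd hu2 hRu hu43 hR0
    rw [← hu, EuclideanSpace.norm_eq]
    apply Real.sqrt_le_sqrt
    rw [hsum_ap]; exact hbound
  · -- distance to the sphere
    obtain ⟨T, hT⟩ : ∃ T : ℝ, T = ‖a - z‖ := ⟨_, rfl⟩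
    have hT2 : T^2 = R^2 - W := by rw [hT, hnaz]; exact Real.sq_sqrt hRW0
    have hTR : T ≤ R := by rw [hT]; exact hazR
    have hT1 : R - 1 ≤ T := by
      rw [hT, hnaz]
      calc R - 1 = Real.sqrt ((R-1)^2) := (Real.sqrt_sq (by linarith)).symm
        _ ≤ Real.sqrt (R^2 - W) := Real.sqrt_le_sqrt (aux_RW1 hWR)
    have hTpos : 0 < T := by linarith
    obtain ⟨ee, hee⟩ : ∃ ee : ℝ, ee = (1/2:ℝ)^(d-1) := ⟨_, rfl⟩
    have hee0 : 0 ≤ ee := by rw [hee]; positivity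
    obtain ⟨K, hK⟩ : ∃ K : ℝ, K = f^[d-1] 1 := ⟨_, rfl⟩
    have hK0 : 0 ≤ K := by rw [hK]; exact f_iter_one_nonneg _
    have hgoal_exp : (1:ℝ) - 1/2^(d-1) = 1 - ee := by
      rw [hee, one_div_pow]
    have hu' : (0:ℝ) < u := by linarith
    have hb : (0:ℝ) < 2*u/R := by positivity
    -- key numeric inequality
    have hkey : K * (4*u)^ee ≤ 4*u^2 := by
      rcases Nat.eq_or_lt_of_le hd with h2 | h3
      · -- d = 2
        have hd2' : d = 2 := h2.symm
        subst hd2'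
        have hKe : K ≤ 13/4 := by
          rw [hK]; simpa using f_one_le
        have hu32 : u ≤ 3/2 := by
          rw [hu, show ((2:ℕ):ℝ) = 2 by norm_num,
            show (3/2:ℝ) = Real.sqrt ((3/2)^2) from (Real.sqrt_sq (by norm_num)).symm]
          exact Real.sqrt_le_sqrt (by norm_num)
        have heeval : ee = 1/2 := by rw [hee]; norm_num
        have hsq : (4*u)^ee = Real.sqrt (4*u) := by
          rw [heeval, Real.sqrt_eq_rpow]
        have hsqb : Real.sqrt (4*u) ≤ 32/13 := by
          calc Real.sqrt (4*u) ≤ Real.sqrt ((32/13)^2) :=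
                Real.sqrt_le_sqrt (by norm_num; linarith)
            _ = 32/13 := Real.sqrt_sq (by norm_num)
        have hu22 : u^2 = 2 := by rw [hu2]; norm_num
        calc K * (4*u)^ee ≤ (13/4) * (32/13) := by
              rw [hsq]
              exact mul_le_mul hKe hsqb (Real.sqrt_nonneg _) (by norm_num)
          _ = 8 := by norm_num
          _ = 4*u^2 := by rw [hu22]; norm_num
      · -- 3 ≤ d
        have hd3R : (3:ℝ) ≤ (d:ℝ) := by exact_mod_cast h3
        have hKe : K ≤ 6 := by rw [hK]; exact f_iter_one_le _
        have h4u1 : (1:ℝ) ≤ 4*u := by linarith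
        have heele : ee ≤ 1/4 := by
          rw [hee]
          calc ((1:ℝ)/2)^(d-1) ≤ ((1:ℝ)/2)^2 :=
                pow_le_pow_of_le_one (by norm_num) (by norm_num) (by omega)
            _ = 1/4 := by norm_num
        have hrle : (4*u)^ee ≤ (4*u)^((1/4:ℝ)) :=
          Real.rpow_le_rpow_of_exponent_le h4u1 heele
        have h4u4 : 4*u ≤ u^4 := aux_4u hu2 hd3R hu0 hu43
        have hru : (4*u)^((1/4:ℝ)) ≤ u := by
          calc (4*u)^((1/4:ℝ)) ≤ (u^(4:ℕ))^((1/4:ℝ)) :=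
                Real.rpow_le_rpow (by linarith) (by exact_mod_cast h4u4) (by norm_num)
            _ = u := by
                rw [← Real.rpow_natCast u 4, ← Real.rpow_mul hu0]
                norm_num
        have h6u : 6*u ≤ 4*u^2 := aux_6u hu2 hd3R hu0
        calc K * (4*u)^ee ≤ 6 * u :=
              mul_le_mul hKe (le_trans hrle hru) (Real.rpow_nonneg (by linarith) _) (by norm_num)
          _ ≤ 4*u^2 := h6u
    -- put it together
    have hWbound : W ≤ K * (2*R)^ee := by
      calc W ≤ f^[d-1] D₁ := hWf
        _ ≤ f^[d-1] (2*R) := f_mono.iterate _ (by linarith)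
        _ ≤ f^[d-1] 1 * (2*R) ^ ((1/2:ℝ)^(d-1)) := f_iter_le _ _ (by linarith)
        _ = K * (2*R)^ee := by rw [hK, hee]
    have hne1 : ((2*u:ℝ))^ee ≠ 0 := ne_of_gt (Real.rpow_pos_of_pos (by linarith) _)
    have hne2 : (R:ℝ)^ee ≠ 0 := ne_of_gt (Real.rpow_pos_of_pos hR0 _)
    have heq : 2*u*(2*u/R)^(1-ee) = 4*u^2 * R^ee / (R * (2*u)^ee) := by
      rw [Real.rpow_sub hb, Real.rpow_one,
        Real.div_rpow (show (0:ℝ) ≤ 2*u by linarith) hR0.le]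
      field_simp
      ring
    have hfinal : K * (2*R)^ee / R ≤ 2*u*(2*u/R)^(1-ee) := by
      rw [heq, div_le_div_iff₀ hR0 (by positivity)]
      rw [Real.mul_rpow (by norm_num) hR0.le]
      have h4u : (2:ℝ)^ee * (2*u)^ee = (4*u)^ee := by
        rw [← Real.mul_rpow (by norm_num) (by linarith),
          show (2:ℝ)*(2*u) = 4*u by ring]
      have hkey' : K * ((2:ℝ)^ee * (2*u)^ee) ≤ 4*u^2 := by rw [h4u]; exact hkey
      calc K * ((2:ℝ)^ee * R^ee) * (R * (2*u)^ee)
          ≤ (4*u^2) * (R^ee * R) := aux_mulfin hkey' (Real.rpow_nonneg hR0.le ee) hR0.le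
        _ = 4*u^2 * R^ee * R := by ring
    -- distance to sphere bound
    obtain ⟨q, hqdef⟩ : ∃ q : EuclideanSpace ℝ (Fin d), q = z + (R / T) • (a - z) :=
      ⟨_, rfl⟩
    have hq_mem : q ∈ Metric.sphere z R := by
      rw [Metric.mem_sphere, dist_eq_norm, hqdef, add_sub_cancel_left, norm_smul,
        Real.norm_eq_abs, ← hT, abs_of_nonneg (by positivity)]
      field_simp
    have hdq : dist a q = R - T := by
      rw [dist_eq_norm, hqdef]
      have e : a - (z + (R / T) • (a - z)) = (1 - R/T) • (a - z) := by
        rw [sub_smul, one_smul]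
        abel
      rw [e, norm_smul, Real.norm_eq_abs, ← hT,
        abs_of_nonpos (by
          rw [sub_nonpos, le_div_iff₀ hTpos]; linarith)]
      field_simp
      ring
    rw [← hu, hgoal_exp]
    calc Metric.infDist a (Metric.sphere z R) ≤ dist a q :=
          Metric.infDist_le_dist_of_mem hq_mem
      _ = R - T := hdq
      _ ≤ W / R := by
          rw [le_div_iff₀ hR0]
          exact aux_RT hT2 hTR hTpos.le
      _ ≤ K * (2*R)^ee / R := (div_le_div_iff_of_pos_right hR0).mpr hWbound
      _ ≤ 2*u*(2*u/R)^(1-ee) := hfinal
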